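/- Let 𝒞₁, 𝒞₂ : ℙ → ℤ be two functions on the point set ℙ of ℙ^{k-1}(𝔽_q) (k ≥ 2). If their Radon transforms agree, i.e. Σ_{x ∈ H} 𝒞₁(x) = Σ_{x ∈ H} 𝒞₂(x) for every hyperplane H, then 𝒞₁ = 𝒞₂. -/

import Mathlib

open Module Finset Function

section Aux

variable {F : Type*} [Field F] [Fintype F]

/-- dual pair for two independent vectors -/
lemma radon_aux_dual_pair {V : Type*} [AddCommGroup V] [Module F V] {v w : V}
    (hvw : LinearIndependent F ![v, w]) :
    ∃ φ ψ : Module.Dual F V, φ v = 1 ∧ φ w = 0 ∧ ψ v = 0 ∧ ψ w = 1 := by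
  classical
  have hne : v ≠ w := by
    have := hvw.injective.ne (show (0 : Fin 2) ≠ 1 by decide)
    simpa using this
  have hs : LinearIndepOn F id (Set.range ![v, w]) := (linearIndepOn_id_range_iff hvw.injective).mpr hvw
  let b := Basis.extend hs
  have hv : v ∈ hs.extend (Set.subset_univ _) := hs.subset_extend _ ⟨0, rfl⟩
  have hw : w ∈ hs.extend (Set.subset_univ _) := hs.subset_extend _ ⟨1, rfl⟩
  have hbv : b ⟨v, hv⟩ = v := Basis.extend_apply_self hs ⟨v, hv⟩
  have hbw : b ⟨w, hw⟩ = w := Basis.extend_apply_self hs ⟨w, hw⟩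
  have hij : (⟨v, hv⟩ : hs.extend (Set.subset_univ _)) ≠ ⟨w, hw⟩ := by
    simp [Subtype.ext_iff, hne]
  have hco : ∀ i j : hs.extend (Set.subset_univ _),
      b.coord i (b j) = if j = i then 1 else 0 := by
    intro i j
    rw [Basis.coord_apply, Basis.repr_self, Finsupp.single_apply]
  refine ⟨b.coord ⟨v, hv⟩, b.coord ⟨w, hw⟩, ?_, ?_, ?_, ?_⟩
  · have := hco ⟨v, hv⟩ ⟨v, hv⟩; rw [hbv, if_pos rfl] at this; exact this
  · have := hco ⟨v, hv⟩ ⟨w, hw⟩; rw [hbw, if_neg (Ne.symm hij)] at this; exact this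
  · have := hco ⟨w, hw⟩ ⟨v, hv⟩; rw [hbv, if_neg hij] at this; exact this
  · have := hco ⟨w, hw⟩ ⟨w, hw⟩; rw [hbw, if_pos rfl] at this; exact this

/-- cardinality of the solution set of a surjective linear map on the dual -/
lemma radon_aux_card_ker {k : ℕ} {W : Type*} [AddCommGroup W] [Module F W]
    [FiniteDimensional F W]
    (L : Module.Dual F (Fin k → F) →ₗ[F] W) (hL : Function.Surjective L) :
    Nat.card {φ : Module.Dual F (Fin k → F) // L φ = 0}
      = Fintype.card F ^ (k - finrank F W) := by
  have h1 : finrank F (Module.Dual F (Fin k → F)) = k := by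
    rw [Subspace.dual_finrank_eq, Module.finrank_fin_fun]
  have h2 := LinearMap.finrank_range_add_finrank_ker L
  rw [LinearMap.range_eq_top.2 hL, finrank_top, h1] at h2
  have h3 : finrank F (LinearMap.ker L) = k - finrank F W := by omega
  have he : Nat.card {φ : Module.Dual F (Fin k → F) // L φ = 0}
      = Nat.card (LinearMap.ker L) := by
    apply Nat.card_congr
    exact Equiv.subtypeEquivRight (by simp [LinearMap.mem_ker])
  haveI : Finite (Module.Dual F (Fin k → F)) :=
    Finite.of_injective (fun φ => (φ : (Fin k → F) → F)) DFunLike.coe_injective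
  haveI : Fintype (LinearMap.ker L) := Fintype.ofFinite _
  rw [he, Nat.card_eq_fintype_card, card_eq_pow_finrank (K := F), h3]

end Aux

/-- Injectivity of the Radon transform on the finite projective space `ℙ^{k-1}(𝔽_q)`:
if two integer-valued functions on the point set have the same sum over every hyperplane
(hyperplanes being points of the projectivized dual space, incidence given by vanishing
of a representing functional on a representing vector), then they are equal. -/
theorem stmt1 {F : Type*} [Field F] [Fintype F] (k : ℕ) (hk : 2 ≤ k)
    (C₁ C₂ : Projectivization F (Fin k → F) → ℤ)
    (h : ∀ H : Projectivization F (Module.Dual F (Fin k → F)),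
      (∑ᶠ x ∈ {z : Projectivization F (Fin k → F) | H.rep z.rep = 0}, C₁ x) =
        ∑ᶠ x ∈ {z : Projectivization F (Fin k → F) | H.rep z.rep = 0}, C₂ x) :
    C₁ = C₂ := by
  classical
  haveI : Finite (Module.Dual F (Fin k → F)) :=
    Finite.of_injective (fun φ : Module.Dual F (Fin k → F) => (φ : (Fin k → F) → F)) DFunLike.coe_injective
  haveI : Finite (Projectivization F (Fin k → F)) := Finite.of_surjective
    (fun v : {v : Fin k → F // v ≠ 0} => Projectivization.mk F v.1 v.2)
    (fun z => ⟨⟨z.rep, z.rep_nonzero⟩, z.mk_rep⟩)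
  haveI : Fintype (Module.Dual F (Fin k → F)) := Fintype.ofFinite _
  haveI : Fintype (Projectivization F (Fin k → F)) := Fintype.ofFinite _
  set q : ℕ := Fintype.card F with hq
  have hq2 : 2 ≤ q := Fintype.one_lt_card
  set D : Projectivization F (Fin k → F) → ℤ := fun z => C₁ z - C₂ z with hD
  -- Step 0: the hypothesis in Finset form
  have h0 : ∀ φ : Module.Dual F (Fin k → F), φ ≠ 0 → ∑ z : Projectivization F (Fin k → F), (if φ z.rep = 0 then D z else 0) = 0 := by
    intro φ hφ
    have hH := h (Projectivization.mk F φ hφ)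
    obtain ⟨c, hc⟩ := Projectivization.exists_smul_eq_mk_rep F φ hφ
    have hset : {z : Projectivization F (Fin k → F) | (Projectivization.mk F φ hφ).rep z.rep = 0}
        = {z : Projectivization F (Fin k → F) | φ z.rep = 0} := by
      ext z
      simp only [Set.mem_setOf_eq, ← hc, LinearMap.smul_apply]
      exact smul_eq_zero_iff_eq c
    rw [hset] at hH
    have hfin : {z : Projectivization F (Fin k → F) | φ z.rep = 0}.Finite := Set.toFinite _
    rw [finsum_mem_eq_finite_toFinset_sum _ hfin, finsum_mem_eq_finite_toFinset_sum _ hfin] at hH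
    have : ∀ C : Projectivization F (Fin k → F) → ℤ, ∑ z ∈ hfin.toFinset, C z
        = ∑ z : Projectivization F (Fin k → F), (if φ z.rep = 0 then C z else 0) := by
      intro C
      rw [← Finset.sum_filter]
      apply Finset.sum_congr _ (fun _ _ => rfl)
      ext z; simp
    rw [this C₁, this C₂] at hH
    simp only [hD]
    rw [← Finset.sum_filter, Finset.sum_sub_distrib, Finset.sum_filter, Finset.sum_filter, hH,
      sub_self]
  -- counting lemmas
  have hcard1 : ∀ u : Fin k → F, u ≠ 0 →
      (Finset.univ.filter fun φ : Module.Dual F (Fin k → F) => φ u = 0).card = q ^ (k - 1) := by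
    intro u hu
    set L : Module.Dual F (Fin k → F) →ₗ[F] F := Module.Dual.eval F (Fin k → F) u with hL
    have hLs : Function.Surjective L := by
      obtain ⟨φ, hφ⟩ : ∃ φ : Module.Dual F (Fin k → F), φ u ≠ 0 := by
        by_contra hcon
        push_neg at hcon
        exact hu ((Module.forall_dual_apply_eq_zero_iff F u).1 hcon)
      intro y
      refine ⟨(y * (φ u)⁻¹) • φ, ?_⟩
      simp only [hL, Module.Dual.eval_apply, LinearMap.smul_apply, smul_eq_mul]
      field_simp
    have := radon_aux_card_ker L hLs
    rw [Module.finrank_self] at this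
    rw [← Fintype.card_subtype]
    rw [← Nat.card_eq_fintype_card]
    convert this using 3
    ext φ; simp [hL, Module.Dual.eval_apply]
  have hcard2 : ∀ v w : Fin k → F, LinearIndependent F ![v, w] →
      (Finset.univ.filter fun φ : Module.Dual F (Fin k → F) => φ v = 0 ∧ φ w = 0).card = q ^ (k - 2) := by
    intro v w hvw
    set L : Module.Dual F (Fin k → F) →ₗ[F] F × F := (Module.Dual.eval F (Fin k → F) v).prod (Module.Dual.eval F (Fin k → F) w) with hL
    have hLs : Function.Surjective L := by
      obtain ⟨φ, ψ, h1, h2, h3, h4⟩ := radon_aux_dual_pair hvw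
      rintro ⟨x, y⟩
      refine ⟨x • φ + y • ψ, ?_⟩
      simp [hL, LinearMap.prod_apply, Module.Dual.eval_apply, h1, h2, h3, h4]
    have := radon_aux_card_ker L hLs
    rw [Module.finrank_prod, Module.finrank_self] at this
    rw [← Fintype.card_subtype, ← Nat.card_eq_fintype_card]
    have he : Nat.card {φ : Module.Dual F (Fin k → F) // φ v = 0 ∧ φ w = 0} = Nat.card {φ : Module.Dual F (Fin k → F) // L φ = 0} := by
      apply Nat.card_congr
      apply Equiv.subtypeEquivRight
      intro φ
      simp [hL, Prod.ext_iff, Module.Dual.eval_apply]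
    rw [he, this]
  -- Step 1: total sum is zero
  have hS : ∑ z : Projectivization F (Fin k → F), D z = 0 := by
    have hA : ∑ φ : Module.Dual F (Fin k → F), ∑ z : Projectivization F (Fin k → F), (if φ z.rep = 0 then D z else 0) = ∑ z : Projectivization F (Fin k → F), D z := by
      rw [Finset.sum_eq_single_of_mem (0 : Module.Dual F (Fin k → F)) (Finset.mem_univ _)
        (fun φ _ hφ => h0 φ hφ)]
      simp
    have hB : ∑ φ : Module.Dual F (Fin k → F), ∑ z : Projectivization F (Fin k → F), (if φ z.rep = 0 then D z else 0)
        = (q ^ (k - 1) : ℤ) * ∑ z : Projectivization F (Fin k → F), D z := by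
      rw [Finset.sum_comm, Finset.mul_sum]
      apply Finset.sum_congr rfl
      intro z _
      rw [← Finset.sum_filter, Finset.sum_const, hcard1 z.rep z.rep_nonzero]
      push_cast
      ring
    rw [hA] at hB
    have hne : (q ^ (k - 1) : ℤ) - 1 ≠ 0 := by
      have : (2:ℤ) ≤ (q:ℤ) ^ (k-1) := by
        calc (2:ℤ) ≤ q := by exact_mod_cast hq2
        _ = (q:ℤ)^1 := (pow_one _).symm
        _ ≤ (q:ℤ)^(k-1) := pow_le_pow_right₀ (by omega) (by omega)
      omega
    have : ((q ^ (k - 1) : ℤ) - 1) * ∑ z : Projectivization F (Fin k → F), D z = 0 := by linarith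
    rcases mul_eq_zero.1 this with h' | h'
    · exact absurd h' hne
    · exact h'
  -- Step 2: pointwise
  have key : ∀ z₀ : Projectivization F (Fin k → F), D z₀ = 0 := by
    intro z₀
    set v₀ := z₀.rep with hv₀
    have hv₀ne : v₀ ≠ 0 := z₀.rep_nonzero
    have hB0 : ∑ φ ∈ Finset.univ.filter (fun φ : Module.Dual F (Fin k → F) => φ v₀ = 0),
        ∑ z : Projectivization F (Fin k → F), (if φ z.rep = 0 then D z else 0) = 0 := by
      apply Finset.sum_eq_zero
      intro φ _
      by_cases hφ : φ = 0
      · subst hφ; simpa using hS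
      · exact h0 φ hφ
    have hBc : ∑ φ ∈ Finset.univ.filter (fun φ : Module.Dual F (Fin k → F) => φ v₀ = 0),
        ∑ z : Projectivization F (Fin k → F), (if φ z.rep = 0 then D z else 0)
        = ∑ z : Projectivization F (Fin k → F), ((if z = z₀ then (q ^ (k-1) : ℤ) else (q ^ (k-2) : ℤ)) * D z) := by
      rw [Finset.sum_comm]
      apply Finset.sum_congr rfl
      intro z _
      rw [← Finset.sum_filter, Finset.filter_filter, Finset.sum_const]
      by_cases hz : z = z₀
      · subst hz
        have : (Finset.univ.filter fun φ : Module.Dual F (Fin k → F) => φ v₀ = 0 ∧ φ z.rep = 0)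
            = Finset.univ.filter fun φ : Module.Dual F (Fin k → F) => φ z.rep = 0 := by
          apply Finset.filter_congr
          intro φ _
          simp [← hv₀]
        rw [this, hcard1 z.rep z.rep_nonzero, if_pos rfl]
        push_cast; ring
      · have hind : LinearIndependent F ![v₀, z.rep] := by
          rw [linearIndependent_fin2]
          constructor
          · simpa using z.rep_nonzero
          · intro a ha
            simp only [Matrix.cons_val_one, Matrix.head_cons, Matrix.cons_val_zero] at ha
            apply hz
            have : Projectivization.mk F v₀ hv₀ne = Projectivization.mk F z.rep z.rep_nonzero := by
              rw [Projectivization.mk_eq_mk_iff']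
              exact ⟨a, ha⟩
            have h1 : Projectivization.mk F z.rep z.rep_nonzero = z := z.mk_rep
            rw [← h1, ← this]
            exact z₀.mk_rep
        rw [hcard2 v₀ z.rep hind, if_neg hz]
        push_cast; ring
    rw [hB0] at hBc
    have hsplit : ∑ z : Projectivization F (Fin k → F), ((if z = z₀ then (q ^ (k-1) : ℤ) else (q ^ (k-2) : ℤ)) * D z)
        = (q ^ (k-2) : ℤ) * ∑ z : Projectivization F (Fin k → F), D z
          + ((q ^ (k-1) : ℤ) - (q ^ (k-2) : ℤ)) * D z₀ := by
      have hterm : ∀ z : Projectivization F (Fin k → F), (if z = z₀ then (q ^ (k-1) : ℤ) else (q ^ (k-2) : ℤ)) * D z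
          = (q ^ (k-2) : ℤ) * D z
            + (if z = z₀ then ((q ^ (k-1) : ℤ) - (q ^ (k-2) : ℤ)) * D z₀ else 0) := by
        intro z
        by_cases hz : z = z₀
        · subst hz; simp; ring
        · simp [hz]
      rw [Finset.sum_congr rfl (fun z _ => hterm z), Finset.sum_add_distrib,
        Finset.sum_ite_eq' Finset.univ z₀, ← Finset.mul_sum]
      simp
    rw [hsplit, hS, mul_zero, zero_add] at hBc
    have hlt : (q ^ (k-2) : ℤ) < (q ^ (k-1) : ℤ) := by
      have : q ^ (k-2) < q ^ (k-1) := Nat.pow_lt_pow_right (by omega) (by omega)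
      exact_mod_cast this
    rcases mul_eq_zero.1 hBc.symm with h' | h'
    · omega
    · exact h'
  funext z₀
  have := key z₀
  simp only [hD] at this
  omega
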